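/- The isoperiodic deformation system (with controls c₁,...,c_{g+1} real-analytic functions) dλ_j/dξ = −Σ_k c_k/(λ_j − α_k), dα_k/dξ = Σ_{ℓ≠k} (c_k + c_ℓ)/(α_ℓ − α_k) − ½ Σ_j c_k/(λ_j − α_k) preserves the conditions λ₄ = λ₃ = α₂ (a triple coincidence of two branch points with a critical point): if at some ξ₀ one has λ₃(ξ₀) = λ₄(ξ₀) = α₂(ξ₀), c₂ ≡ 0, and the equations are interpreted by continuity (the singular terms 1/(λ₃−α₂), 1/(λ₄−α₂) are absent since c₂ = 0 multiplies them), then λ₃(ξ) = λ₄(ξ) = α₂(ξ) for all ξ in the interval of existence. -/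

import Mathlib

open Complex Finset

private lemma fwd14 {f h : ℝ → ℂ} {a b : ℝ} (hab : a ≤ b)
    (hcont : ContinuousOn h (Set.Icc a b))
    (hf : ∀ t ∈ Set.Icc a b, HasDerivAt f (h t * f t) t)
    (h0 : f a = 0) : f b = 0 := by
  obtain ⟨C, hC⟩ := isCompact_Icc.exists_bound_of_continuousOn hcont
  have hfc : ContinuousOn f (Set.Icc a b) := fun t ht =>
    (hf t ht).continuousAt.continuousWithinAt
  have key := norm_le_gronwallBound_of_norm_deriv_right_le (δ := 0) (K := C) (ε := 0)
    hfc (fun t ht => ((hf t (Set.Ico_subset_Icc_self ht)).hasDerivWithinAt))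
    (by simp [h0])
    (fun t ht => by
      rw [norm_mul]
      have := hC t (Set.Ico_subset_Icc_self ht)
      have h1 : ‖h t‖ * ‖f t‖ ≤ C * ‖f t‖ :=
        mul_le_mul_of_nonneg_right this (norm_nonneg _)
      simpa using h1)
    b (Set.right_mem_Icc.2 hab)
  rw [gronwallBound_ε0] at key
  have hb : ‖f b‖ ≤ 0 := by simpa using key
  exact norm_le_zero_iff.mp hb

private lemma bwd14 {f h : ℝ → ℂ} {a b : ℝ} (hab : a ≤ b)
    (hcont : ContinuousOn h (Set.Icc a b))
    (hf : ∀ t ∈ Set.Icc a b, HasDerivAt f (h t * f t) t)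
    (h0 : f b = 0) : f a = 0 := by
  have hmap : ∀ t ∈ Set.Icc a b, a + b - t ∈ Set.Icc a b := by
    intro t ht
    exact ⟨by linarith [ht.2], by linarith [ht.1]⟩
  have := fwd14 (f := fun t => f (a + b - t)) (h := fun t => -h (a + b - t)) hab
    (ContinuousOn.neg (hcont.comp (by fun_prop) hmap))
    (fun t ht => by
      have hd : HasDerivAt (fun t : ℝ => a + b - t) (-1) t := by
        exact (hasDerivAt_id' t).const_sub (a + b)
      have H := HasDerivAt.scomp t (hf (a + b - t) (hmap t ht)) hd
      refine H.congr_deriv (Eq.symm ?_)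
      simp [neg_mul])
    (by simpa using h0)
  simpa using this

private lemma zero_of_ode14 {f h : ℝ → ℂ} {s : Set ℝ} (hconn : IsPreconnected s)
    (hh : ContinuousOn h s) (hf : ∀ ξ ∈ s, HasDerivAt f (h ξ * f ξ) ξ)
    {ξ₀ : ℝ} (hξ₀ : ξ₀ ∈ s) (h0 : f ξ₀ = 0) : ∀ ξ ∈ s, f ξ = 0 := by
  have hord : s.OrdConnected := hconn.ordConnected
  intro ξ hξ
  rcases le_total ξ₀ ξ with hle | hle
  · have hsub : Set.Icc ξ₀ ξ ⊆ s := hord.out hξ₀ hξ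
    exact fwd14 hle (hh.mono hsub) (fun t ht => hf t (hsub ht)) h0
  · have hsub : Set.Icc ξ ξ₀ ⊆ s := hord.out hξ hξ₀
    exact bwd14 hle (hh.mono hsub) (fun t ht => hf t (hsub ht)) h0

/-- The isoperiodic deformation system with control `c₂ ≡ 0` preserves the triple
coincidence `λ₃ = λ₄ = α₂` (0-based: `lam 2 = lam 3 = a 1`): if the coincidence holds
at some `ξ₀` in a connected open interval of existence, it holds throughout. -/
theorem stmt14 (g : ℕ) (s : Set ℝ) (hs : IsOpen s) (hconn : IsPreconnected s)
    (lam a c : ℕ → ℝ → ℂ)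
    (hccont : ∀ k, ContinuousOn (c k) s)
    (hacont : ∀ k, ContinuousOn (a k) s)
    (hc2 : ∀ ξ, c 1 ξ = 0)
    (hne : ∀ ξ ∈ s, ∀ k ∈ (Finset.range (g + 1)).erase 1,
      lam 2 ξ ≠ a k ξ ∧ lam 3 ξ ≠ a k ξ ∧ a 1 ξ ≠ a k ξ)
    (hl2 : ∀ ξ ∈ s, HasDerivAt (lam 2)
      (-∑ k ∈ (Finset.range (g + 1)).erase 1, c k ξ / (lam 2 ξ - a k ξ)) ξ)
    (hl3 : ∀ ξ ∈ s, HasDerivAt (lam 3)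
      (-∑ k ∈ (Finset.range (g + 1)).erase 1, c k ξ / (lam 3 ξ - a k ξ)) ξ)
    (ha1 : ∀ ξ ∈ s, HasDerivAt (a 1)
      (-∑ k ∈ (Finset.range (g + 1)).erase 1, c k ξ / (a 1 ξ - a k ξ)) ξ)
    (ξ₀ : ℝ) (hξ₀ : ξ₀ ∈ s)
    (hinit : lam 2 ξ₀ = a 1 ξ₀ ∧ lam 3 ξ₀ = a 1 ξ₀) :
    ∀ ξ ∈ s, lam 2 ξ = a 1 ξ ∧ lam 3 ξ = a 1 ξ := by
  set E := (Finset.range (g + 1)).erase 1 with hE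
  -- continuity of the solutions
  have hl2c : ContinuousOn (lam 2) s := fun ξ hξ => (hl2 ξ hξ).continuousAt.continuousWithinAt
  have hl3c : ContinuousOn (lam 3) s := fun ξ hξ => (hl3 ξ hξ).continuousAt.continuousWithinAt
  -- the generic argument, applied to `lam 2` and `lam 3`
  have main : ∀ L : ℝ → ℂ, ContinuousOn L s →
      (∀ ξ ∈ s, ∀ k ∈ E, L ξ ≠ a k ξ) →
      (∀ ξ ∈ s, HasDerivAt L (-∑ k ∈ E, c k ξ / (L ξ - a k ξ)) ξ) →
      L ξ₀ = a 1 ξ₀ → ∀ ξ ∈ s, L ξ = a 1 ξ := by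
    intro L hLc hLne hLd hL0
    set h : ℝ → ℂ := fun ξ => ∑ k ∈ E, c k ξ / ((a 1 ξ - a k ξ) * (L ξ - a k ξ)) with hh
    have hhc : ContinuousOn h s := by
      apply continuousOn_finset_sum
      intro k hk
      exact (hccont k).div
        ((((hacont 1).sub (hacont k)).mul (hLc.sub (hacont k))))
        (fun ξ hξ => mul_ne_zero (sub_ne_zero.2 (hne ξ hξ k hk).2.2)
          (sub_ne_zero.2 (hLne ξ hξ k hk)))
    have hder : ∀ ξ ∈ s, HasDerivAt (fun t => L t - a 1 t) (h ξ * (L ξ - a 1 ξ)) ξ := by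
      intro ξ hξ
      have H := (hLd ξ hξ).sub (ha1 ξ hξ)
      refine H.congr_deriv (Eq.symm ?_)
      rw [hh]
      have : (-∑ k ∈ E, c k ξ / (L ξ - a k ξ)) - (-∑ k ∈ E, c k ξ / (a 1 ξ - a k ξ))
          = ∑ k ∈ E, (c k ξ / (a 1 ξ - a k ξ) - c k ξ / (L ξ - a k ξ)) := by
        rw [Finset.sum_sub_distrib]; ring
      rw [this, Finset.sum_mul]
      refine Finset.sum_congr rfl (fun k hk => ?_)
      have h1 : a 1 ξ - a k ξ ≠ 0 := sub_ne_zero.2 (hne ξ hξ k hk).2.2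
      have h2 : L ξ - a k ξ ≠ 0 := sub_ne_zero.2 (hLne ξ hξ k hk)
      field_simp
      ring
    have := zero_of_ode14 hconn hhc hder hξ₀ (by simp [hL0])
    intro ξ hξ
    have := this ξ hξ
    simpa [sub_eq_zero] using this
  intro ξ hξ
  exact ⟨main (lam 2) hl2c (fun ξ hξ k hk => (hne ξ hξ k hk).1) hl2 hinit.1 ξ hξ,
    main (lam 3) hl3c (fun ξ hξ k hk => (hne ξ hξ k hk).2.1) hl3 hinit.2 ξ hξ⟩
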